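/- A kernel k : {0,1}^d × {0,1}^d → ℝ is positive semidefinite and invariant under all automorphisms of the hypercube graph Q_d if and only if there exist nonnegative reals α_0, α_1, …, α_d such that k(x, y) = Σ_{j=0}^{d} α_j · Σ_{T ⊆ Fin d, |T| = j} w_T(x) · w_T(y) for all x, y ∈ {0,1}^d. -/

import Mathlib

/-- Hamming weight of a point of the Boolean cube `{0,1}^d`. -/
def wt {d : ℕ} (x : Fin d → ZMod 2) : ℕ :=
  (Finset.univ.filter (fun i => x i = 1)).card

/-- The hypercube graph `Q_d`. -/
def cubeGraph (d : ℕ) : SimpleGraph (Fin d → ZMod 2) where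
  Adj x y := wt (x + y) = 1
  symm := ⟨fun x y h => by show wt (y + x) = 1; rw [add_comm]; exact h⟩
  loopless := ⟨fun x h => by
    change wt (x + x) = 1 at h
    have hx : x + x = 0 := by funext i; exact CharTwo.add_self_eq_zero (x i)
    rw [hx] at h
    simp [wt] at h⟩

/-- The Walsh function `w_T` on the Boolean cube `{0,1}^d`. -/
def walsh {d : ℕ} (T : Finset (Fin d)) (x : Fin d → ZMod 2) : ℝ :=
  (-1 : ℝ) ^ (T.filter (fun t => x t = 1)).card

namespace StmtAux

variable {d : ℕ}

def chi (a : ZMod 2) : ℝ := if a = 1 then -1 else 1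

lemma chi_add (a b : ZMod 2) : chi (a + b) = chi a * chi b := by
  have h : ∀ a : ZMod 2, a = 0 ∨ a = 1 := by decide
  have h11 : (1 : ZMod 2) + 1 = 0 := by decide
  rcases h a with rfl | rfl <;> rcases h b with rfl | rfl <;>
    simp [chi, h11] <;> norm_num

lemma walsh_eq_prod (T : Finset (Fin d)) (x : Fin d → ZMod 2) :
    walsh T x = ∏ t ∈ T, chi (x t) := by
  unfold walsh chi
  rw [Finset.prod_ite, Finset.prod_const, Finset.prod_const, one_pow, mul_one]

lemma walsh_mul (T : Finset (Fin d)) (x y : Fin d → ZMod 2) :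
    walsh T x * walsh T y = walsh T (x + y) := by
  simp only [walsh_eq_prod, Pi.add_apply, chi_add, Finset.prod_mul_distrib]

lemma add_self_zero (x : Fin d → ZMod 2) : x + x = 0 := by
  funext i; exact CharTwo.add_self_eq_zero (x i)

lemma add_eq_zero_iff {x y : Fin d → ZMod 2} : x + y = 0 ↔ x = y := by
  constructor
  · intro h; funext i
    have := congrFun h i
    revert this
    have : ∀ a b : ZMod 2, a + b = 0 → a = b := by decide
    exact this _ _
  · rintro rfl; exact add_self_zero x

lemma sum_walsh (z : Fin d → ZMod 2) :
    ∑ T : Finset (Fin d), walsh T z = if z = 0 then (2:ℝ)^d else 0 := by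
  have h1 : ∑ T : Finset (Fin d), walsh T z = ∏ i, (chi (z i) + 1) := by
    rw [Finset.prod_add]
    rw [← Finset.powerset_univ]
    refine Finset.sum_congr rfl fun T _ => ?_
    simp [walsh_eq_prod]
  rw [h1]
  split_ifs with h
  · subst h
    simp [chi, Finset.prod_const]
    norm_num
  · have : ∃ i, z i ≠ 0 := by
      by_contra hc
      push_neg at hc
      exact h (funext hc)
    obtain ⟨i, hi⟩ := this
    have hz1 : z i = 1 := by
      have h01 : ∀ a : ZMod 2, a ≠ 0 → a = 1 := by decide
      exact h01 _ hi
    apply Finset.prod_eq_zero (Finset.mem_univ i)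
    simp [chi, hz1]

lemma wt_comp (z : Fin d → ZMod 2) (σ : Equiv.Perm (Fin d)) :
    wt (fun i => z (σ i)) = wt z := by
  unfold wt
  rw [Finset.card_filter, Finset.card_filter]
  exact Fintype.sum_equiv σ _ _ (fun i => rfl)

lemma walsh_comp (T : Finset (Fin d)) (σ : Equiv.Perm (Fin d)) (z : Fin d → ZMod 2) :
    walsh T (fun i => z (σ i)) = walsh (T.image σ) z := by
  unfold walsh
  congr 1
  rw [Finset.filter_image]
  rw [Finset.card_image_of_injective _ σ.injective]

lemma exists_perm_of_card_eq {T S : Finset (Fin d)} (h : T.card = S.card) :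
    ∃ σ : Equiv.Perm (Fin d), T.image σ = S := by
  classical
  have e0 : {x // x ∈ T} ≃ {x // x ∈ S} :=
    Fintype.equivOfCardEq (by simp [Fintype.card_coe, h])
  refine ⟨e0.extendSubtype, ?_⟩
  apply Finset.eq_of_subset_of_card_le
  · intro x hx
    simp only [Finset.mem_image] at hx
    obtain ⟨a, ha, rfl⟩ := hx
    exact e0.extendSubtype_mem a ha
  · rw [Finset.card_image_of_injective _ (Equiv.injective _), h]

lemma exists_perm_of_wt_eq {z z' : Fin d → ZMod 2} (h : wt z = wt z') :
    ∃ σ : Equiv.Perm (Fin d), ∀ i, z (σ i) = z' i := by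
  classical
  have hc : Fintype.card {i // z' i = 1} = Fintype.card {i // z i = 1} := by
    rw [Fintype.card_subtype, Fintype.card_subtype]
    exact h.symm
  have e0 : {i // z' i = 1} ≃ {i // z i = 1} := Fintype.equivOfCardEq hc
  refine ⟨e0.extendSubtype, fun i => ?_⟩
  by_cases hi : z' i = 1
  · rw [hi]
    exact e0.extendSubtype_mem i hi
  · have h2 := e0.extendSubtype_not_mem i hi
    have : ∀ a b : ZMod 2, a ≠ 1 → b ≠ 1 → a = b := by decide
    exact this _ _ h2 hi

lemma levelsum_comp (σ : Equiv.Perm (Fin d)) (j : ℕ) (z : Fin d → ZMod 2) :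
    ∑ T ∈ Finset.univ.filter (fun T : Finset (Fin d) => T.card = j),
      walsh T (fun i => z (σ i)) =
    ∑ T ∈ Finset.univ.filter (fun T : Finset (Fin d) => T.card = j), walsh T z := by
  simp only [walsh_comp _ σ z]
  refine Finset.sum_equiv σ.finsetCongr ?_ ?_
  · intro T
    simp [Finset.card_map]
  · intro T _
    rw [Equiv.finsetCongr_apply, Finset.map_eq_image]
    rfl

lemma levelsum_wt {z z' : Fin d → ZMod 2} (h : wt z = wt z') (j : ℕ) :
    ∑ T ∈ Finset.univ.filter (fun T : Finset (Fin d) => T.card = j), walsh T z =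
    ∑ T ∈ Finset.univ.filter (fun T : Finset (Fin d) => T.card = j), walsh T z' := by
  obtain ⟨σ, hσ⟩ := exists_perm_of_wt_eq h
  have : z' = fun i => z (σ i) := by funext i; exact (hσ i).symm
  rw [this, levelsum_comp]

lemma wt_eq_zero_iff {z : Fin d → ZMod 2} : wt z = 0 ↔ z = 0 := by
  unfold wt
  rw [Finset.card_eq_zero, Finset.filter_eq_empty_iff]
  constructor
  · intro h
    funext i
    have h01 : ∀ a : ZMod 2, a ≠ 1 → a = 0 := by decide
    exact h01 _ (h (Finset.mem_univ i))
  · rintro rfl i _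
    simp

lemma wt_add_le (a b : Fin d → ZMod 2) : wt (a + b) ≤ wt a + wt b := by
  unfold wt
  classical
  have hsub : (Finset.univ.filter fun i => (a + b) i = 1) ⊆
      (Finset.univ.filter fun i => a i = 1) ∪ (Finset.univ.filter fun i => b i = 1) := by
    intro i hi
    simp only [Finset.mem_filter, Finset.mem_univ, true_and, Pi.add_apply] at hi
    have h1 : ∀ x y : ZMod 2, x + y = 1 → x = 1 ∨ y = 1 := by decide
    simp only [Finset.mem_union, Finset.mem_filter, Finset.mem_univ, true_and]
    exact h1 _ _ hi
  calc _ ≤ ((Finset.univ.filter fun i => a i = 1) ∪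
        (Finset.univ.filter fun i => b i = 1)).card := Finset.card_le_card hsub
    _ ≤ _ := Finset.card_union_le _ _

lemma wt_single (i : Fin d) : wt (fun j => if j = i then (1:ZMod 2) else 0) = 1 := by
  unfold wt
  have : (Finset.univ.filter fun j => (if j = i then (1:ZMod 2) else 0) = 1) = {i} := by
    ext j
    by_cases h : j = i <;> simp [h]
  rw [this, Finset.card_singleton]

lemma wt_update_zero (z : Fin d → ZMod 2) (i : Fin d) (hi : z i = 1) :
    wt (Function.update z i 0) = wt z - 1 := by
  unfold wt
  classical
  have : (Finset.univ.filter fun j => Function.update z i 0 j = 1) =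
      (Finset.univ.filter fun j => z j = 1).erase i := by
    ext j
    by_cases h : j = i
    · subst h; simp
    · simp [h, Function.update_of_ne h]
  rw [this, Finset.card_erase_of_mem (by simp [hi])]

lemma exists_walk (x y : Fin d → ZMod 2) :
    ∃ p : (cubeGraph d).Walk x y, p.length = wt (x + y) := by
  classical
  generalize hn : wt (x + y) = n
  induction n generalizing x with
  | zero =>
    have hxy : x = y := add_eq_zero_iff.mp (wt_eq_zero_iff.mp hn)
    subst hxy
    exact ⟨SimpleGraph.Walk.nil, rfl⟩
  | succ n ih =>
    have hpos : (Finset.univ.filter fun j => (x + y) j = 1).Nonempty := by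
      rw [← Finset.card_pos]
      show 0 < wt (x + y)
      omega
    obtain ⟨i, hi⟩ := hpos
    simp only [Finset.mem_filter, Finset.mem_univ, true_and] at hi
    set x' := Function.update x i (x i + 1) with hx'
    have hadj : (cubeGraph d).Adj x x' := by
      show wt (x + x') = 1
      have hxx : x + x' = fun j => if j = i then (1:ZMod 2) else 0 := by
        funext j
        by_cases h : j = i
        · subst h
          simp [hx', Function.update_self]
          have : ∀ a : ZMod 2, a + (a + 1) = 1 := by decide
          exact this _
        · simp [hx', Function.update_of_ne h, h]
          have : ∀ a : ZMod 2, a + a = 0 := by decide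
          exact this _
      rw [hxx, wt_single]
    have hupd : x' + y = Function.update (x + y) i 0 := by
      funext j
      by_cases h : j = i
      · subst h
        simp [hx', Function.update_self]
        have : ∀ a b : ZMod 2, a + b = 1 → a + 1 + b = 0 := by decide
        exact this _ _ hi
      · simp [hx', Function.update_of_ne h, h]
    have hwt' : wt (x' + y) = n := by
      rw [hupd, wt_update_zero _ _ hi, hn]; omega
    obtain ⟨p, hp⟩ := ih x' hwt'
    exact ⟨SimpleGraph.Walk.cons hadj p, by simp [hp]⟩

lemma wt_le_walk_length {x y : Fin d → ZMod 2} (p : (cubeGraph d).Walk x y) :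
    wt (x + y) ≤ p.length := by
  induction p with
  | nil =>
    simp [add_self_zero, wt_eq_zero_iff]
  | @cons u v w h p ih =>
    have key : u + w = (u + v) + (v + w) := by
      funext j
      have : ∀ a b c : ZMod 2, a + c = (a + b) + (b + c) := by decide
      exact this _ _ _
    have hadj : wt (u + v) = 1 := h
    calc wt (u + w) ≤ wt (u + v) + wt (v + w) := by rw [key]; exact wt_add_le _ _
      _ = 1 + wt (v + w) := by rw [hadj]
      _ ≤ 1 + p.length := by omega
      _ ≤ (SimpleGraph.Walk.cons h p).length := by
        rw [SimpleGraph.Walk.length_cons]; omega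

lemma dist_eq (x y : Fin d → ZMod 2) : (cubeGraph d).dist x y = wt (x + y) := by
  obtain ⟨p, hp⟩ := exists_walk x y
  refine le_antisymm (hp ▸ SimpleGraph.dist_le p) ?_
  have hr : (cubeGraph d).Reachable x y := ⟨p⟩
  obtain ⟨q, hq⟩ := hr.exists_walk_length_eq_dist
  calc wt (x + y) ≤ q.length := wt_le_walk_length q
    _ = _ := hq

lemma iso_dist_le (φ : cubeGraph d ≃g cubeGraph d) (x y : Fin d → ZMod 2) :
    (cubeGraph d).dist (φ x) (φ y) ≤ (cubeGraph d).dist x y := by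
  obtain ⟨p, hp⟩ := exists_walk x y
  calc (cubeGraph d).dist (φ x) (φ y) ≤ (p.map φ.toHom).length := SimpleGraph.dist_le _
    _ = p.length := SimpleGraph.Walk.length_map _ _
    _ = wt (x + y) := hp
    _ = (cubeGraph d).dist x y := (dist_eq x y).symm

lemma iso_wt (φ : cubeGraph d ≃g cubeGraph d) (x y : Fin d → ZMod 2) :
    wt (φ x + φ y) = wt (x + y) := by
  rw [← dist_eq, ← dist_eq]
  refine le_antisymm (iso_dist_le φ x y) ?_
  have := iso_dist_le φ.symm (φ x) (φ y)
  simpa using this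

def transIso (a : Fin d → ZMod 2) : cubeGraph d ≃g cubeGraph d where
  toEquiv := Equiv.addLeft a
  map_rel_iff' := by
    intro x y
    have h : (a + x) + (a + y) = x + y := by
      funext i
      have h2 : ∀ u v w : ZMod 2, (u + v) + (u + w) = v + w := by decide
      exact h2 _ _ _
    show wt ((a + x) + (a + y)) = 1 ↔ wt (x + y) = 1
    rw [h]

def permIso (σ : Equiv.Perm (Fin d)) : cubeGraph d ≃g cubeGraph d where
  toEquiv := Equiv.arrowCongr σ (Equiv.refl (ZMod 2))
  map_rel_iff' := by
    intro x y
    show wt (_ + _) = 1 ↔ wt (x + y) = 1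
    have h : (Equiv.arrowCongr σ (Equiv.refl (ZMod 2)) x) +
        (Equiv.arrowCongr σ (Equiv.refl (ZMod 2)) y) = fun i => (x + y) (σ.symm i) := by
      funext i
      simp [Equiv.arrowCongr]
    rw [h, wt_comp (x + y) σ.symm]

lemma permIso_apply (σ : Equiv.Perm (Fin d)) (x : Fin d → ZMod 2) :
    (permIso σ) x = fun i => x (σ.symm i) := by
  funext i
  simp [permIso, Equiv.arrowCongr]

end StmtAux

/-- A kernel is positive semidefinite if it is symmetric and all its quadratic
forms on finite tuples are nonnegative. -/
def IsPSD {X : Type*} (k : X → X → ℝ) : Prop :=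
  (∀ x y, k x y = k y x) ∧
    ∀ (m : ℕ) (x : Fin m → X) (c : Fin m → ℝ),
      0 ≤ ∑ i, ∑ j, c i * c j * k (x i) (x j)

open StmtAux

/-- A kernel on the Boolean cube is positive semidefinite and invariant under
all automorphisms of the hypercube graph iff it is a nonnegative combination
of the level sums of Walsh functions. -/
theorem stmt3 (d : ℕ) (k : (Fin d → ZMod 2) → (Fin d → ZMod 2) → ℝ) :
    (IsPSD k ∧ ∀ φ : cubeGraph d ≃g cubeGraph d, ∀ x y : Fin d → ZMod 2,
        k (φ x) (φ y) = k x y) ↔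
      ∃ α : ℕ → ℝ, (∀ j ≤ d, 0 ≤ α j) ∧
        ∀ x y : Fin d → ZMod 2,
          k x y = ∑ j ∈ Finset.range (d + 1), α j *
            ∑ T ∈ Finset.univ.filter (fun T : Finset (Fin d) => T.card = j),
              walsh T x * walsh T y := by
  constructor
  · rintro ⟨⟨hsymm, hquad⟩, hinv⟩
    classical
    set f : (Fin d → ZMod 2) → ℝ := fun z => k z 0 with hf
    have hkf : ∀ x y, k x y = f (x + y) := by
      intro x y
      have h := hinv (transIso y) x y
      have h1 : (transIso y) x = x + y := add_comm y x
      have h2 : (transIso y) y = 0 := add_self_zero y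
      rw [h1, h2] at h
      exact h.symm
    have hfp : ∀ (σ : Equiv.Perm (Fin d)) (z : Fin d → ZMod 2),
        f (fun i => z (σ i)) = f z := by
      intro σ z
      have h := hinv (permIso σ.symm) z 0
      have h1 : (permIso σ.symm) z = fun i => z (σ i) := by
        rw [permIso_apply]
        funext i
        simp
      have h2 : (permIso σ.symm) 0 = 0 := by
        rw [permIso_apply]
        rfl
      rw [h1, h2] at h
      exact h
    set c : Finset (Fin d) → ℝ := fun T => (∑ z, f z * walsh T z) / 2^d with hc
    have h2d : (0:ℝ) < 2^d := by positivity
    have horth : ∀ w z : Fin d → ZMod 2,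
        ∑ T : Finset (Fin d), walsh T w * walsh T z = if w = z then (2:ℝ)^d else 0 := by
      intro w z
      simp only [walsh_mul]
      rw [sum_walsh]
      exact if_congr add_eq_zero_iff rfl rfl
    have hExp : ∀ z, f z = ∑ T : Finset (Fin d), c T * walsh T z := by
      intro z
      symm
      calc ∑ T : Finset (Fin d), c T * walsh T z
          = (∑ T : Finset (Fin d), ∑ w, f w * walsh T w * walsh T z) / 2^d := by
            rw [Finset.sum_div]
            refine Finset.sum_congr rfl fun T _ => ?_
            rw [hc, div_mul_eq_mul_div, Finset.sum_mul]
        _ = (∑ w, f w * ∑ T : Finset (Fin d), walsh T w * walsh T z) / 2^d := by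
            rw [Finset.sum_comm]
            congr 1
            refine Finset.sum_congr rfl fun w _ => ?_
            rw [Finset.mul_sum]
            exact Finset.sum_congr rfl fun T _ => by ring
        _ = (∑ w, if w = z then f w * (2:ℝ)^d else 0) / 2^d := by
            congr 1
            refine Finset.sum_congr rfl fun w _ => ?_
            rw [horth, mul_ite, mul_zero]
        _ = f z := by
            rw [Finset.sum_ite_eq' Finset.univ z (fun w => f w * (2:ℝ)^d)]
            simp only [Finset.mem_univ, if_true]
            field_simp
    have hcnn : ∀ T, 0 ≤ c T := by
      intro T
      have hcard : Fintype.card (Fin d → ZMod 2) = 2^d := by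
        rw [Fintype.card_fun]
        simp
      set e := (Fintype.equivFinOfCardEq hcard).symm with he
      have h0 := hquad (2^d) (fun i => e i) (fun i => walsh T (e i))
      have h1 : ∑ i, ∑ j, walsh T (e i) * walsh T (e j) * k (e i) (e j)
          = ∑ u, ∑ v, walsh T u * walsh T v * k u v := by
        rw [← Equiv.sum_comp e (fun u => ∑ v, walsh T u * walsh T v * k u v)]
        refine Finset.sum_congr rfl fun i _ => ?_
        rw [← Equiv.sum_comp e (fun v => walsh T (e i) * walsh T v * k (e i) v)]
      rw [h1] at h0
      have h2 : ∑ u, ∑ v, walsh T u * walsh T v * k u v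
          = (2^d : ℝ) * ∑ w, f w * walsh T w := by
        have inner : ∀ u : Fin d → ZMod 2,
            ∑ v, walsh T u * walsh T v * k u v = ∑ w, f w * walsh T w := by
          intro u
          rw [← Equiv.sum_comp (Equiv.addLeft u) (fun v => walsh T u * walsh T v * k u v)]
          refine Finset.sum_congr rfl fun w _ => ?_
          have huu : u + (u + w) = w := by
            funext i
            have h3 : ∀ a b : ZMod 2, a + (a + b) = b := by decide
            exact h3 _ _
          show walsh T u * walsh T (u + w) * k u (u + w) = f w * walsh T w
          rw [hkf u (u + w), huu, walsh_mul T u (u + w), huu]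
          ring
        rw [Finset.sum_congr rfl fun u _ => inner u, Finset.sum_const, Finset.card_univ,
          hcard, nsmul_eq_mul]
        push_cast
        ring
      rw [h2] at h0
      have h4 : 0 ≤ ∑ w, f w * walsh T w := nonneg_of_mul_nonneg_right h0 h2d
      exact div_nonneg h4 (le_of_lt h2d)
    have hccard : ∀ T S : Finset (Fin d), T.card = S.card → c T = c S := by
      intro T S h
      obtain ⟨σ, hσ⟩ := exists_perm_of_card_eq h
      rw [← hσ]
      have hsum : ∑ z, f z * walsh (T.image σ) z = ∑ z, f z * walsh T z := by
        rw [← Equiv.sum_comp (Equiv.arrowCongr σ (Equiv.refl (ZMod 2)))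
              (fun z => f z * walsh (T.image σ) z)]
        refine Finset.sum_congr rfl fun w _ => ?_
        have hApp : (Equiv.arrowCongr σ (Equiv.refl (ZMod 2))) w
            = fun i => w (σ.symm i) := by
          funext i
          simp [Equiv.arrowCongr]
        rw [hApp]
        have hw : walsh (T.image σ) (fun i => w (σ.symm i)) = walsh T w := by
          rw [← walsh_comp T σ (fun i => w (σ.symm i))]
          congr 1
          funext i
          simp
        rw [hw, hfp σ.symm w]
      simp only [hc]
      rw [hsum]
    set Tcan : ℕ → Finset (Fin d) :=
      fun j => Finset.univ.filter (fun i : Fin d => (i:ℕ) < j) with hTcan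
    have hTcard : ∀ j ≤ d, (Tcan j).card = j := by
      intro j hj
      have himg : (Tcan j).image Fin.val = Finset.range j := by
        ext n
        simp only [hTcan, Finset.mem_image, Finset.mem_filter, Finset.mem_univ, true_and,
          Finset.mem_range]
        constructor
        · rintro ⟨i, hi, rfl⟩; exact hi
        · intro hn
          exact ⟨⟨n, lt_of_lt_of_le hn hj⟩, hn, rfl⟩
      have := Finset.card_image_of_injective (Tcan j) (Fin.val_injective)
      rw [himg, Finset.card_range] at this
      omega
    refine ⟨fun j => c (Tcan j), fun j _ => hcnn _, fun x y => ?_⟩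
    calc k x y = f (x + y) := hkf x y
      _ = ∑ T : Finset (Fin d), c T * walsh T (x + y) := hExp _
      _ = ∑ T : Finset (Fin d), c T * (walsh T x * walsh T y) :=
          Finset.sum_congr rfl fun T _ => by rw [walsh_mul]
      _ = ∑ j ∈ Finset.range (d+1),
            ∑ T ∈ Finset.univ.filter (fun T : Finset (Fin d) => T.card = j),
              c T * (walsh T x * walsh T y) := by
          symm
          apply Finset.sum_fiberwise_of_maps_to
          intro T _
          simp only [Finset.mem_range]
          have := Finset.card_le_univ T
          rw [Fintype.card_fin] at this
          omega
      _ = ∑ j ∈ Finset.range (d+1), (fun j => c (Tcan j)) j *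
            ∑ T ∈ Finset.univ.filter (fun T : Finset (Fin d) => T.card = j),
              walsh T x * walsh T y := by
          refine Finset.sum_congr rfl fun j hj => ?_
          simp only
          rw [Finset.mul_sum]
          refine Finset.sum_congr rfl fun T hT => ?_
          simp only [Finset.mem_filter] at hT
          rw [hccard T (Tcan j)
            (by rw [hTcard j (by simpa [Nat.lt_succ_iff] using hj)]; exact hT.2)]
  · rintro ⟨α, hα, hk⟩
    refine ⟨⟨?_, ?_⟩, ?_⟩
    · intro x y
      rw [hk, hk]
      refine Finset.sum_congr rfl fun j _ => ?_
      congr 1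
      exact Finset.sum_congr rfl fun T _ => mul_comm _ _
    · intro m x c
      have key : ∀ T : Finset (Fin d),
          ∑ i, ∑ j, c i * c j * (walsh T (x i) * walsh T (x j))
            = (∑ i, c i * walsh T (x i))^2 := by
        intro T
        rw [sq, Finset.sum_mul_sum]
        exact Finset.sum_congr rfl fun i _ => Finset.sum_congr rfl fun j _ => by ring
      have main : ∑ i, ∑ j, c i * c j * k (x i) (x j)
          = ∑ l ∈ Finset.range (d+1), α l *
              ∑ T ∈ Finset.univ.filter (fun T : Finset (Fin d) => T.card = l),
                (∑ i, c i * walsh T (x i))^2 := by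
        calc ∑ i, ∑ j, c i * c j * k (x i) (x j)
            = ∑ i, ∑ j, ∑ l ∈ Finset.range (d+1),
                ∑ T ∈ Finset.univ.filter (fun T : Finset (Fin d) => T.card = l),
                  c i * c j * (α l * (walsh T (x i) * walsh T (x j))) := by
              refine Finset.sum_congr rfl fun i _ => Finset.sum_congr rfl fun j _ => ?_
              rw [hk, Finset.mul_sum]
              refine Finset.sum_congr rfl fun l _ => ?_
              rw [Finset.mul_sum, Finset.mul_sum]
          _ = ∑ i, ∑ l ∈ Finset.range (d+1), ∑ j, 
                ∑ T ∈ Finset.univ.filter (fun T : Finset (Fin d) => T.card = l),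
                  c i * c j * (α l * (walsh T (x i) * walsh T (x j))) := by
              exact Finset.sum_congr rfl fun i _ => Finset.sum_comm
          _ = ∑ l ∈ Finset.range (d+1), ∑ i, ∑ j, 
                ∑ T ∈ Finset.univ.filter (fun T : Finset (Fin d) => T.card = l),
                  c i * c j * (α l * (walsh T (x i) * walsh T (x j))) := Finset.sum_comm
          _ = ∑ l ∈ Finset.range (d+1), ∑ i, 
                ∑ T ∈ Finset.univ.filter (fun T : Finset (Fin d) => T.card = l), ∑ j,
                  c i * c j * (α l * (walsh T (x i) * walsh T (x j))) := by
              exact Finset.sum_congr rfl fun l _ => Finset.sum_congr rfl fun i _ =>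
                Finset.sum_comm
          _ = ∑ l ∈ Finset.range (d+1),
                ∑ T ∈ Finset.univ.filter (fun T : Finset (Fin d) => T.card = l), ∑ i, ∑ j,
                  c i * c j * (α l * (walsh T (x i) * walsh T (x j))) := by
              exact Finset.sum_congr rfl fun l _ => Finset.sum_comm
          _ = ∑ l ∈ Finset.range (d+1), α l *
                ∑ T ∈ Finset.univ.filter (fun T : Finset (Fin d) => T.card = l),
                  (∑ i, c i * walsh T (x i))^2 := by
              refine Finset.sum_congr rfl fun l _ => ?_
              rw [Finset.mul_sum]
              refine Finset.sum_congr rfl fun T _ => ?_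
              rw [← key T, Finset.mul_sum]
              refine Finset.sum_congr rfl fun i _ => ?_
              rw [Finset.mul_sum]
              exact Finset.sum_congr rfl fun j _ => by ring
      rw [main]
      refine Finset.sum_nonneg fun l hl => ?_
      refine mul_nonneg (hα l (by simpa [Nat.lt_succ_iff] using hl)) ?_
      exact Finset.sum_nonneg fun T _ => sq_nonneg _
    · intro φ x y
      rw [hk, hk]
      refine Finset.sum_congr rfl fun l _ => ?_
      congr 1
      calc ∑ T ∈ Finset.univ.filter (fun T : Finset (Fin d) => T.card = l),
              walsh T (φ x) * walsh T (φ y)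
          = ∑ T ∈ Finset.univ.filter (fun T : Finset (Fin d) => T.card = l),
              walsh T (φ x + φ y) :=
            Finset.sum_congr rfl fun T _ => walsh_mul T _ _
        _ = ∑ T ∈ Finset.univ.filter (fun T : Finset (Fin d) => T.card = l),
              walsh T (x + y) := levelsum_wt (iso_wt φ x y) l
        _ = _ := Finset.sum_congr rfl fun T _ => (walsh_mul T x y).symm
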